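/- (P-update for the symmetric Dirichlet energy.) Let w > 0, μ > 0, and let Q ∈ ℝ^{d×d} be symmetric. Then there exists exactly one symmetric positive definite matrix P ∈ ℝ^{d×d} satisfying the quartic matrix equation (w+μ)P⁴ − μQP³ − wI = 0. -/

import Mathlib

open Matrix Polynomial

section Aux

lemma scalar_exists (w μ : ℝ) (hw : 0 < w) (hμ : 0 < μ) (q : ℝ) :
    ∃ x : ℝ, 0 < x ∧ (w + μ) * x ^ 4 - μ * q * x ^ 3 - w = 0 := by
  set g : ℝ → ℝ := fun x => (w + μ) * x ^ 4 - μ * q * x ^ 3 - w with hg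
  set b : ℝ := max 1 ((μ * |q| + w) / (w + μ)) with hb
  have hwμ : 0 < w + μ := by linarith
  have hb1 : (1:ℝ) ≤ b := le_max_left _ _
  have hb0 : 0 < b := lt_of_lt_of_le one_pos hb1
  have hb2 : μ * |q| + w ≤ (w + μ) * b := by
    rw [hb]
    calc μ * |q| + w = (w + μ) * ((μ * |q| + w) / (w + μ)) := by field_simp
    _ ≤ (w + μ) * max 1 ((μ * |q| + w) / (w + μ)) :=
        mul_le_mul_of_nonneg_left (le_max_right _ _) hwμ.le
  have hq : μ * q ≤ μ * |q| := mul_le_mul_of_nonneg_left (le_abs_self q) hμ.le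
  have hgb : 0 ≤ g b := by
    have hb3 : (1:ℝ) ≤ b ^ 3 := one_le_pow₀ hb1
    have : μ * q + w ≤ (w + μ) * b := by linarith
    have h4 : (w + μ) * b ^ 4 = b ^ 3 * ((w + μ) * b) := by ring
    simp only [hg]
    nlinarith [mul_le_mul_of_nonneg_left this (pow_pos hb0 3).le]
  have h0 : g 0 < 0 := by simp [hg]; linarith
  have hcont : ContinuousOn g (Set.Icc 0 b) := (Continuous.continuousOn (by fun_prop))
  have hmem : (0:ℝ) ∈ Set.Icc (g 0) (g b) := ⟨h0.le, hgb⟩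
  obtain ⟨x, hx, hgx⟩ := intermediate_value_Icc hb0.le hcont hmem
  refine ⟨x, ?_, hgx⟩
  rcases lt_or_eq_of_le hx.1 with h | h
  · exact h
  · exfalso; rw [← h] at hgx; rw [hgx] at h0; exact lt_irrefl 0 h0

lemma scalar_unique (w μ : ℝ) (hw : 0 < w) (hμ : 0 < μ) (q x y : ℝ) (hx : 0 < x) (hy : 0 < y)
    (hex : (w + μ) * x ^ 4 - μ * q * x ^ 3 - w = 0)
    (hey : (w + μ) * y ^ 4 - μ * q * y ^ 3 - w = 0) : x = y := by
  have key : (x - y) * ((w + μ) * x ^ 3 * y ^ 3 + w * (x ^ 2 + x * y + y ^ 2)) = 0 := by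
    linear_combination y ^ 3 * hex - x ^ 3 * hey
  have hpos : 0 < (w + μ) * x ^ 3 * y ^ 3 + w * (x ^ 2 + x * y + y ^ 2) := by positivity
  rcases mul_eq_zero.mp key with h | h
  · linarith
  · linarith

variable {n : Type*} [Fintype n] [DecidableEq n]

/-- Conjugation by a unitary matrix as an `AlgHom`. -/
noncomputable def unitaryConjAlgHom (U : Matrix n n ℝ)
    (h1 : U * Uᴴ = 1) (h2 : Uᴴ * U = 1) : Matrix n n ℝ →ₐ[ℝ] Matrix n n ℝ where
  toFun X := U * X * Uᴴ
  map_one' := by show U * 1 * Uᴴ = 1; rw [mul_one, h1]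
  map_mul' X Y := by
    calc U * (X * Y) * Uᴴ = (U * X) * (Uᴴ * U) * (Y * Uᴴ) := by rw [h2]; noncomm_ring
    _ = U * X * Uᴴ * (U * Y * Uᴴ) := by noncomm_ring
  map_zero' := by simp
  map_add' X Y := by show U * (X + Y) * Uᴴ = _; rw [Matrix.mul_add, Matrix.add_mul]
  commutes' r := by
    show U * algebraMap ℝ _ r * Uᴴ = _
    simp only [Algebra.algebraMap_eq_smul_one, Matrix.smul_mul, Matrix.mul_smul, mul_one, h1]

lemma unitaryConjAlgHom_injective (U : Matrix n n ℝ) (h1 : U * Uᴴ = 1) (h2 : Uᴴ * U = 1) :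
    Function.Injective (unitaryConjAlgHom U h1 h2) := by
  intro X Y h
  have h' : Uᴴ * (U * X * Uᴴ) * U = Uᴴ * (U * Y * Uᴴ) * U := by
    simpa [unitaryConjAlgHom] using congrArg (fun Z => Uᴴ * Z * U) h
  calc X = (Uᴴ * U) * X * (Uᴴ * U) := by rw [h2]; noncomm_ring
  _ = Uᴴ * (U * X * Uᴴ) * U := by noncomm_ring
  _ = Uᴴ * (U * Y * Uᴴ) * U := h'
  _ = (Uᴴ * U) * Y * (Uᴴ * U) := by noncomm_ring
  _ = Y := by rw [h2]; noncomm_ring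

lemma posDef_unitary_conj {M U : Matrix n n ℝ} (hM : M.PosDef)
    (h1 : U * Uᴴ = 1) : (U * M * Uᴴ).PosDef := by
  refine posDef_iff_dotProduct_mulVec.mpr ⟨?_, ?_⟩
  · show (U * M * Uᴴ)ᴴ = U * M * Uᴴ
    calc (U * M * Uᴴ)ᴴ = U * Mᴴ * Uᴴ := by simp [conjTranspose_mul, Matrix.mul_assoc]
    _ = U * M * Uᴴ := by rw [hM.1.eq]
  · intro x hx
    have hvec : (U * M * Uᴴ) *ᵥ x = U *ᵥ (M *ᵥ (Uᴴ *ᵥ x)) := by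
      simp [← mulVec_mulVec]
    have hne : Uᴴ *ᵥ x ≠ 0 := by
      intro h
      apply hx
      have h' : (U * Uᴴ) *ᵥ x = U *ᵥ (Uᴴ *ᵥ x) := by rw [← mulVec_mulVec]
      rw [h, mulVec_zero, h1, one_mulVec] at h'
      exact h'
    have key : star x ⬝ᵥ ((U * M * Uᴴ) *ᵥ x) = star (Uᴴ *ᵥ x) ⬝ᵥ (M *ᵥ (Uᴴ *ᵥ x)) := by
      rw [hvec, dotProduct_mulVec, star_mulVec, conjTranspose_conjTranspose,
        ← dotProduct_mulVec]
    rw [key]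
    exact hM.dotProduct_mulVec_pos hne

end Aux

/-- P-update for the symmetric Dirichlet energy: for `w, μ > 0` and
symmetric `Q`, there is exactly one symmetric positive definite matrix `P`
satisfying `(w+μ)P⁴ − μQP³ − wI = 0`. -/
theorem p_update_symmetric_dirichlet (d : ℕ) (w μ : ℝ) (hw : 0 < w) (hμ : 0 < μ)
    (Q : Matrix (Fin d) (Fin d) ℝ) (hQ : Qᵀ = Q) :
    ∃! P : Matrix (Fin d) (Fin d) ℝ, P.PosDef ∧
      (w + μ) • P ^ 4 - μ • (Q * P ^ 3) - w • (1 : Matrix (Fin d) (Fin d) ℝ) = 0 := by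
  classical
  have hQh : Q.IsHermitian := by
    rw [IsHermitian, conjTranspose_eq_transpose_of_trivial]; exact hQ
  set U : Matrix (Fin d) (Fin d) ℝ := (hQh.eigenvectorUnitary : Matrix (Fin d) (Fin d) ℝ)
    with hU
  have h1 : U * Uᴴ = 1 := by
    have := (Matrix.mem_unitaryGroup_iff).mp hQh.eigenvectorUnitary.2
    rwa [star_eq_conjTranspose] at this
  have h2 : Uᴴ * U = 1 := by
    have := (Matrix.mem_unitaryGroup_iff').mp hQh.eigenvectorUnitary.2
    rwa [star_eq_conjTranspose] at this
  set F : (Fin d → ℝ) →ₐ[ℝ] Matrix (Fin d) (Fin d) ℝ :=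
    (unitaryConjAlgHom U h1 h2).comp (Matrix.diagonalAlgHom ℝ) with hF
  have hFapp : ∀ v : Fin d → ℝ, F v = U * diagonal v * Uᴴ := fun v => rfl
  have hFinj : Function.Injective F :=
    (unitaryConjAlgHom_injective U h1 h2).comp Matrix.diagonal_injective
  set qv : Fin d → ℝ := hQh.eigenvalues with hqv
  have hQspec : Q = F qv := by
    have h := hQh.spectral_theorem
    rw [Unitary.conjStarAlgAut_apply, star_eq_conjTranspose] at h
    have hco : (RCLike.ofReal ∘ hQh.eigenvalues : Fin d → ℝ) = hQh.eigenvalues := by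
      funext i; simp [RCLike.ofReal_real_eq_id]
    rw [hFapp, hqv, ← hco]
    exact h
  -- the equation rewritten through `F`
  have hEqn : ∀ v : Fin d → ℝ,
      (w + μ) • (F v) ^ 4 - μ • (Q * (F v) ^ 3) - w • (1 : Matrix (Fin d) (Fin d) ℝ)
        = F (fun i => (w + μ) * v i ^ 4 - μ * qv i * v i ^ 3 - w) := by
    intro v
    have hv : (fun i => (w + μ) * v i ^ 4 - μ * qv i * v i ^ 3 - w)
        = (w + μ) • v ^ 4 - μ • (qv * v ^ 3) - w • (1 : Fin d → ℝ) := by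
      funext i
      simp only [Pi.sub_apply, Pi.smul_apply, Pi.mul_apply, Pi.pow_apply, Pi.one_apply,
        smul_eq_mul]
      ring
    rw [hv, _root_.map_sub, _root_.map_sub, _root_.map_smul, _root_.map_smul, _root_.map_smul,
      _root_.map_pow, _root_.map_mul, _root_.map_pow, _root_.map_one, hQspec]
  choose f hf using scalar_exists w μ hw hμ
  refine ⟨F (fun i => f (qv i)), ⟨?_, ?_⟩, ?_⟩
  · rw [hFapp]
    exact posDef_unitary_conj (Matrix.PosDef.diagonal fun i => (hf (qv i)).1) h1
  · rw [hEqn]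
    have hz : (fun i => (w + μ) * f (qv i) ^ 4 - μ * qv i * f (qv i) ^ 3 - w)
        = (0 : Fin d → ℝ) := funext fun i => (hf (qv i)).2
    rw [hz, map_zero]
  · rintro A ⟨hA, hAeq⟩
    -- Uniqueness: diagonalize A
    have hAh : A.IsHermitian := hA.1
    set V : Matrix (Fin d) (Fin d) ℝ := (hAh.eigenvectorUnitary : Matrix (Fin d) (Fin d) ℝ)
      with hV
    have g1 : V * Vᴴ = 1 := by
      have := (Matrix.mem_unitaryGroup_iff).mp hAh.eigenvectorUnitary.2
      rwa [star_eq_conjTranspose] at this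
    have g2 : Vᴴ * V = 1 := by
      have := (Matrix.mem_unitaryGroup_iff').mp hAh.eigenvectorUnitary.2
      rwa [star_eq_conjTranspose] at this
    set G : (Fin d → ℝ) →ₐ[ℝ] Matrix (Fin d) (Fin d) ℝ :=
      (unitaryConjAlgHom V g1 g2).comp (Matrix.diagonalAlgHom ℝ) with hG
    have hGapp : ∀ v : Fin d → ℝ, G v = V * diagonal v * Vᴴ := fun v => rfl
    set e : Fin d → ℝ := hAh.eigenvalues with he
    have hepos : ∀ i, 0 < e i := hA.eigenvalues_pos
    have hAspec : A = G e := by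
      have h := hAh.spectral_theorem
      rw [Unitary.conjStarAlgAut_apply, star_eq_conjTranspose] at h
      have hco : (RCLike.ofReal ∘ hAh.eigenvalues : Fin d → ℝ) = hAh.eigenvalues := by
        funext i; simp [RCLike.ofReal_real_eq_id]
      rw [hGapp, he, ← hco]
      exact h
    set einv : Fin d → ℝ := fun i => (e i ^ 3)⁻¹ with heinv
    have hR : A ^ 3 * G einv = 1 := by
      rw [hAspec, ← _root_.map_pow, ← _root_.map_mul, ← _root_.map_one G]
      congr 1
      funext i
      simp only [Pi.mul_apply, Pi.pow_apply, Pi.one_apply, heinv]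
      exact mul_inv_cancel₀ (pow_ne_zero 3 (hepos i).ne')
    -- express Q in the eigenbasis of A
    set gg : Fin d → ℝ := μ⁻¹ • ((w + μ) • (e ^ 4 * einv) - w • einv) with hgg
    have hQrep : Q = G gg := by
      have h5 : μ • (Q * A ^ 3) = (w + μ) • A ^ 4 - w • (1 : Matrix (Fin d) (Fin d) ℝ) := by
        have h := hAeq
        rw [sub_sub, sub_eq_zero] at h
        rw [h]; abel
      have h6 : μ • Q = ((w + μ) • A ^ 4 - w • (1 : Matrix (Fin d) (Fin d) ℝ)) * G einv := by
        rw [← h5, smul_mul_assoc, Matrix.mul_assoc, hR, mul_one]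
      have h7 : ((w + μ) • A ^ 4 - w • (1 : Matrix (Fin d) (Fin d) ℝ)) * G einv
          = G ((w + μ) • (e ^ 4 * einv) - w • einv) := by
        rw [Matrix.sub_mul, smul_mul_assoc, smul_mul_assoc, one_mul, hAspec, ← _root_.map_pow,
          ← _root_.map_mul, _root_.map_sub, _root_.map_smul, _root_.map_smul]
      calc Q = μ⁻¹ • (μ • Q) := by rw [smul_smul, inv_mul_cancel₀ hμ.ne', one_smul]
      _ = μ⁻¹ • G ((w + μ) • (e ^ 4 * einv) - w • einv) := by rw [h6, h7]
      _ = G gg := by rw [hgg, _root_.map_smul]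
    -- eigenvalues of A are determined by those of Q via injectivity of the scalar map
    have hggval : ∀ i, gg i = μ⁻¹ * ((w + μ) * (e i ^ 4 * (e i ^ 3)⁻¹) - w * (e i ^ 3)⁻¹) := by
      intro i
      simp [hgg, heinv, Pi.smul_apply, Pi.mul_apply, Pi.pow_apply, smul_eq_mul, mul_sub]
    have hroot_e : ∀ i, (w + μ) * e i ^ 4 - μ * gg i * e i ^ 3 - w = 0 := by
      intro i
      rw [hggval i]
      have h3 : (e i) ^ 3 ≠ 0 := pow_ne_zero 3 (hepos i).ne'
      have h4 : e i ≠ 0 := (hepos i).ne'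
      field_simp
      ring
    have hgginj : ∀ i j, gg i = gg j → e i = e j := by
      intro i j hij
      refine scalar_unique w μ hw hμ (gg i) _ _ (hepos i) (hepos j) (hroot_e i) ?_
      rw [hij]; exact hroot_e j
    -- Lagrange interpolation polynomial mapping eigenvalues of Q to eigenvalues of A
    set s : Finset ℝ := Finset.univ.image gg with hs
    set r : ℝ → ℝ := fun y => if h : ∃ i, gg i = y then e h.choose else 0 with hr
    set p : ℝ[X] := Lagrange.interpolate s id r with hp
    have hpeval : ∀ i, p.eval (gg i) = e i := by
      intro i
      have hmem : gg i ∈ s := Finset.mem_image_of_mem gg (Finset.mem_univ i)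
      have h1' : p.eval (gg i) = r (gg i) := by
        have := Lagrange.eval_interpolate_at_node r (Set.injOn_id _) hmem
        simpa [hp] using this
      rw [h1']
      have hex : ∃ j, gg j = gg i := ⟨i, rfl⟩
      simp only [hr]
      rw [dif_pos hex]
      exact hgginj _ _ hex.choose_spec
    have hpi : ∀ (H : (Fin d → ℝ) →ₐ[ℝ] Matrix (Fin d) (Fin d) ℝ) (v : Fin d → ℝ),
        Polynomial.aeval (H v) p = H (fun i => p.eval (v i)) := by
      intro H v
      rw [Polynomial.aeval_algHom_apply]
      congr 1
      funext i
      have := Polynomial.aeval_algHom_apply (Pi.evalAlgHom ℝ (fun _ : Fin d => ℝ) i) v p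
      simp only [Pi.evalAlgHom_apply] at this
      rw [← this, Polynomial.coe_aeval_eq_eval]
    have hAQ : A = Polynomial.aeval Q p := by
      rw [hQrep, hpi G gg]
      rw [hAspec]
      congr 1
      funext i
      rw [hpeval i]
    set a : Fin d → ℝ := fun i => p.eval (qv i) with ha
    have hAF : A = F a := by
      rw [hAQ, hQspec, hpi F qv]
    have hApos : ∀ i, 0 < a i := by
      have hd : (diagonal a).PosDef := by
        have hdg : diagonal a = Uᴴ * A * Uᴴᴴ := by
          rw [conjTranspose_conjTranspose, hAF, hFapp]
          calc diagonal a = (Uᴴ * U) * diagonal a * (Uᴴ * U) := by rw [h2]; noncomm_ring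
          _ = Uᴴ * (U * diagonal a * Uᴴ) * U := by noncomm_ring
        rw [hdg]
        refine posDef_unitary_conj hA ?_
        rwa [conjTranspose_conjTranspose]
      exact fun i => posDef_diagonal_iff.mp hd i
    have hroot_a : ∀ i, (w + μ) * a i ^ 4 - μ * qv i * a i ^ 3 - w = 0 := by
      have h0 : F (fun i => (w + μ) * a i ^ 4 - μ * qv i * a i ^ 3 - w) = F 0 := by
        rw [map_zero, ← hEqn a, ← hAF]
        exact hAeq
      intro i
      exact congrFun (hFinj h0) i
    rw [hAF]
    congr 1
    funext i
    exact scalar_unique w μ hw hμ (qv i) (a i) (f (qv i)) (hApos i) (hf (qv i)).1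
      (hroot_a i) (hf (qv i)).2
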